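/- Rosenblatt's first theorem. Let n ≥ 1 and let A and B be disjoint sets of binary vectors in Fin n → Bool. Then there exist a natural number m, hidden-layer weights W : Fin m → (Fin n → ℝ) and thresholds θ : Fin m → ℝ, output weights v : Fin m → ℝ and an output threshold τ ∈ ℝ, such that for every a ∈ A one has ∑ j, v j * H(∑ i, W j i * (a i : ℝ) - θ j) > τ, and for every b ∈ B one has ∑ j, v j * H(∑ i, W j i * (b i : ℝ) - θ j) < τ. That is, an elementary perceptron (a two-layer network of linear threshold units: a hidden layer of A-elements followed by one linear threshold R-element) can separate any two non-intersecting sets of binary images. -/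
import Mathlib


/-- The Heaviside step function: `H t = 1` if `t ≥ 0` and `H t = 0` if `t < 0`. -/
noncomputable def heaviside (t : ℝ) : ℝ := if 0 ≤ t then 1 else 0

lemma detector {n : ℕ} (p x : Fin n → Bool) :
    heaviside ((∑ i, (if p i then (1:ℝ) else -1) * (if x i = true then (1:ℝ) else 0))
      - ∑ i, (if p i then (1:ℝ) else 0)) = if x = p then 1 else 0 := by
  have hterm : ∀ i, (if p i then (1:ℝ) else -1) * (if x i = true then (1:ℝ) else 0)
      - (if p i then (1:ℝ) else 0) = if x i = p i then 0 else -1 := by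
    intro i
    cases hp : p i <;> cases hx : x i <;> simp [hp, hx] <;> norm_num
  rw [← Finset.sum_sub_distrib]
  simp_rw [hterm]
  by_cases h : x = p
  · subst h; simp [heaviside]
  · have ⟨i, hi⟩ : ∃ i, x i ≠ p i := Function.ne_iff.mp h
    have hlt : (∑ i, if x i = p i then (0:ℝ) else -1) < 0 := by
      calc (∑ j : Fin n, if x j = p j then (0:ℝ) else -1)
          ≤ ∑ j : Fin n, if j = i then (if x j = p j then (0:ℝ) else -1) else 0 := by
            apply Finset.sum_le_sum
            intro j _
            by_cases hj : j = i
            · simp [hj]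
            · simp [hj]
              split <;> norm_num
        _ = if x i = p i then 0 else -1 := by rw [Finset.sum_ite_eq' Finset.univ i]; simp
        _ < 0 := by simp [hi]
    simp [heaviside, not_le.mpr hlt, h]

theorem rosenblatt_first_theorem
    (n : ℕ) (hn : 1 ≤ n) (A B : Set (Fin n → Bool)) (hAB : Disjoint A B) :
    ∃ (m : ℕ) (W : Fin m → Fin n → ℝ) (θ : Fin m → ℝ) (v : Fin m → ℝ) (τ : ℝ),
      (∀ a ∈ A,
        (∑ j, v j * heaviside ((∑ i, W j i * (if a i = true then (1 : ℝ) else 0)) - θ j)) > τ) ∧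
      (∀ b ∈ B,
        (∑ j, v j * heaviside ((∑ i, W j i * (if b i = true then (1 : ℝ) else 0)) - θ j)) < τ) := by
  classical
  set m := Fintype.card (Fin n → Bool) with hm
  obtain e : Fin m ≃ (Fin n → Bool) := (Fintype.equivFin (Fin n → Bool)).symm
  refine ⟨m, fun j i => if e j i then 1 else -1, fun j => ∑ i, if e j i then (1:ℝ) else 0,
    fun j => if e j ∈ A then 1 else -1, 0, ?_, ?_⟩
  all_goals
    intro x hx
    have key : ∀ j : Fin m,
        (if e j ∈ A then (1:ℝ) else -1) *
          heaviside ((∑ i, (if e j i then (1:ℝ) else -1) * (if x i = true then (1:ℝ) else 0))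
            - ∑ i, (if e j i then (1:ℝ) else 0))
        = if j = e.symm x then (if e j ∈ A then (1:ℝ) else -1) else 0 := by
      intro j
      rw [detector (e j) x]
      by_cases h : j = e.symm x
      · subst h; simp
      · have : x ≠ e j := by
          intro hxe
          exact h (by rw [hxe, Equiv.symm_apply_apply])
        simp [this, h]
    simp only [key]
    rw [Finset.sum_ite_eq' Finset.univ (e.symm x)]
    simp only [Finset.mem_univ, if_true, Equiv.apply_symm_apply]
  · simp [hx]
  · have : x ∉ A := fun hA => hAB.ne_of_mem hA hx rfl
    simp [this]
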